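/- Let E ⊆ ℝⁿ (n ≥ 2) be a bounded convex set with nonempty interior, and let x₀, x₁ ∈ ∂E be points realizing the diameter, i.e. |x₁ − x₀| = diam(E). Then for every t ∈ [0,1], the (n−1)-dimensional slice E_t = {x̃ ∈ ℝ^{n−1} : x_t + (x̃,0) ∈ E} of E by the hyperplane through x_t = t·x₁ + (1−t)·x₀ orthogonal to x₁ − x₀ (in coordinates where x₁ − x₀ points in the n-th coordinate direction) satisfies H^{n−1}(E_t) ≤ n·|E|/diam(E). -/

import Mathlib

open MeasureTheory Metric Bornology
open scoped ENNReal Pointwise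

/-- The embedding `ℝ^{n-1} → ℝⁿ`, `x̃ ↦ (x̃, 0)`, appending `0` as the last coordinate. -/
noncomputable def padZero (m : ℕ) (x : EuclideanSpace ℝ (Fin m)) :
    EuclideanSpace ℝ (Fin (m + 1)) :=
  (EuclideanSpace.equiv (Fin (m + 1)) ℝ).symm
    (Fin.snoc (EuclideanSpace.equiv (Fin m) ℝ x) 0)

/-- The horizontal `(n-1)`-dimensional slice of `E ⊆ ℝⁿ` through the point `p`:
`{x̃ ∈ ℝ^{n-1} : p + (x̃, 0) ∈ E}`. -/
def hslice (m : ℕ) (E : Set (EuclideanSpace ℝ (Fin (m + 1))))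
    (p : EuclideanSpace ℝ (Fin (m + 1))) : Set (EuclideanSpace ℝ (Fin m)) :=
  {x : EuclideanSpace ℝ (Fin m) | p + padZero m x ∈ E}

/-! ### Auxiliary material -/

/-- Appending an arbitrary last coordinate. -/
noncomputable def snocE (m : ℕ) (y : EuclideanSpace ℝ (Fin m)) (c : ℝ) :
    EuclideanSpace ℝ (Fin (m + 1)) :=
  (EuclideanSpace.equiv (Fin (m + 1)) ℝ).symm
    (Fin.snoc (EuclideanSpace.equiv (Fin m) ℝ y) c)

/-- Dropping the last coordinate. -/
noncomputable def initE (m : ℕ) (v : EuclideanSpace ℝ (Fin (m + 1))) :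
    EuclideanSpace ℝ (Fin m) :=
  (EuclideanSpace.equiv (Fin m) ℝ).symm (fun i => v (Fin.castSucc i))

lemma padZero_eq (m : ℕ) (x : EuclideanSpace ℝ (Fin m)) : padZero m x = snocE m x 0 := rfl

lemma snocE_castSucc (m : ℕ) (y : EuclideanSpace ℝ (Fin m)) (c : ℝ) (i : Fin m) :
    snocE m y c (Fin.castSucc i) = y i := by
  simp [snocE]

lemma snocE_last (m : ℕ) (y : EuclideanSpace ℝ (Fin m)) (c : ℝ) :
    snocE m y c (Fin.last m) = c := by
  simp [snocE]

lemma eucl_ext {m : ℕ} {v w : EuclideanSpace ℝ (Fin (m+1))}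
    (h1 : ∀ i : Fin m, v (Fin.castSucc i) = w (Fin.castSucc i))
    (h2 : v (Fin.last m) = w (Fin.last m)) : v = w := by
  ext j
  refine Fin.lastCases ?_ ?_ j
  · exact h2
  · exact h1

lemma add_snocE (m : ℕ) (v : EuclideanSpace ℝ (Fin (m+1))) (x : EuclideanSpace ℝ (Fin m)) (c : ℝ) :
    v + snocE m x c = snocE m (initE m v + x) (v (Fin.last m) + c) := by
  refine eucl_ext (fun i => ?_) ?_
  · simp [snocE, initE, PiLp.add_apply]
  · simp [snocE, PiLp.add_apply]

lemma smul_snocE (m : ℕ) (u : ℝ) (x : EuclideanSpace ℝ (Fin m)) (c : ℝ) :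
    u • snocE m x c = snocE m (u • x) (u * c) := by
  refine eucl_ext (fun i => ?_) ?_
  · simp [snocE, PiLp.smul_apply]
  · simp [snocE, PiLp.smul_apply]

lemma snocE_add_snocE (m : ℕ) (x y : EuclideanSpace ℝ (Fin m)) (c e : ℝ) :
    snocE m x c + snocE m y e = snocE m (x + y) (c + e) := by
  refine eucl_ext (fun i => ?_) ?_
  · simp [snocE, PiLp.add_apply]
  · simp [snocE, PiLp.add_apply]

lemma snocE_sub_snocE (m : ℕ) (x y : EuclideanSpace ℝ (Fin m)) (c e : ℝ) :
    snocE m x c - snocE m y e = snocE m (x - y) (c - e) := by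
  refine eucl_ext (fun i => ?_) ?_
  · simp [snocE, PiLp.sub_apply]
  · simp [snocE, PiLp.sub_apply]

lemma snocE_self (m : ℕ) (v : EuclideanSpace ℝ (Fin (m+1))) :
    v = snocE m (initE m v) (v (Fin.last m)) := by
  refine eucl_ext (fun i => ?_) ?_ <;> simp [snocE, initE]

lemma smul_single_eq_snocE (m : ℕ) (r : ℝ) :
    r • EuclideanSpace.single (Fin.last m) (1:ℝ) = snocE m 0 r := by
  refine eucl_ext (fun i => ?_) ?_
  · simp [snocE, EuclideanSpace.single_apply, PiLp.smul_apply,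
      (Fin.castSucc_lt_last i).ne]
  · simp [snocE, EuclideanSpace.single_apply, PiLp.smul_apply]

lemma measurePreserving_snocE (m : ℕ) :
    MeasurePreserving (fun p : ℝ × EuclideanSpace ℝ (Fin m) => snocE m p.2 p.1)
      volume volume := by
  have h1 := (EuclideanSpace.volume_preserving_symm_measurableEquiv_toLp (Fin (m+1))).symm
  have h2 := (volume_preserving_piFinSuccAbove (fun _ : Fin (m+1) => ℝ) (Fin.last m)).symm
  have h3 := (MeasurePreserving.id (volume : Measure ℝ)).prod
      (EuclideanSpace.volume_preserving_symm_measurableEquiv_toLp (Fin m))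
  have H := h1.comp (h2.comp h3)
  convert H using 1
  · rfl
  · rfl
  funext p
  simp only [Function.comp_apply, MeasurableEquiv.piFinSuccAbove_symm_apply,
    Fin.insertNthEquiv_last, Fin.snocEquiv_apply]
  rfl
  rfl

lemma volume_eq_lintegral_slice (m : ℕ) (K : Set (EuclideanSpace ℝ (Fin (m+1))))
    (hK : MeasurableSet K) :
    volume K = ∫⁻ c : ℝ, volume {y : EuclideanSpace ℝ (Fin m) | snocE m y c ∈ K} := by
  have hG := measurePreserving_snocE m
  have hGm : Measurable (fun p : ℝ × EuclideanSpace ℝ (Fin m) => snocE m p.2 p.1) :=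
    hG.measurable
  have h1 : volume K
      = (volume : Measure (ℝ × EuclideanSpace ℝ (Fin m)))
        ((fun p : ℝ × EuclideanSpace ℝ (Fin m) => snocE m p.2 p.1) ⁻¹' K) :=
    (hG.measure_preimage hK.nullMeasurableSet).symm
  rw [h1, Measure.volume_eq_prod, Measure.prod_apply (hGm hK)]
  rfl

lemma volume_slice_translate (m : ℕ) (K : Set (EuclideanSpace ℝ (Fin (m+1))))
    (w : EuclideanSpace ℝ (Fin m)) (c : ℝ) :
    volume {x : EuclideanSpace ℝ (Fin m) | snocE m (w + x) c ∈ K}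
      = volume {y : EuclideanSpace ℝ (Fin m) | snocE m y c ∈ K} := by
  have h : {x : EuclideanSpace ℝ (Fin m) | snocE m (w + x) c ∈ K}
      = (fun x => w + x) ⁻¹' {y : EuclideanSpace ℝ (Fin m) | snocE m y c ∈ K} := rfl
  rw [h, measure_preimage_add]

lemma isBounded_slice (m : ℕ) (K : Set (EuclideanSpace ℝ (Fin (m+1))))
    (hK : IsBounded K) (c : ℝ) :
    IsBounded {y : EuclideanSpace ℝ (Fin m) | snocE m y c ∈ K} := by
  obtain ⟨C, hC⟩ := Metric.isBounded_iff.1 hK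
  refine Metric.isBounded_iff.2 ⟨C, fun y hy z hz => ?_⟩
  have hd : dist y z = dist (snocE m y c) (snocE m z c) := by
    rw [EuclideanSpace.dist_eq, EuclideanSpace.dist_eq, Fin.sum_univ_castSucc]
    simp [snocE_castSucc, snocE_last]
  rw [hd]
  exact hC hy hz

lemma interval_pow_right (α β : ℝ) (h : α < β) (m : ℕ) :
    ∫ c in α..β, ((c - α)/(β - α))^m = (β - α)/(m+1) := by
  have hL : (0:ℝ) < β - α := sub_pos.2 h
  have h1 : ∀ c : ℝ, ((c - α)/(β - α))^m = (c-α)^m / (β-α)^m := fun c => div_pow _ _ _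
  simp only [h1]
  rw [intervalIntegral.integral_div]
  rw [intervalIntegral.integral_comp_sub_right (fun c : ℝ => c^m) α]
  rw [integral_pow]
  have hm : ((m:ℝ)+1) ≠ 0 := by positivity
  field_simp
  ring

lemma interval_pow_left (α β : ℝ) (h : α < β) (m : ℕ) :
    ∫ c in α..β, ((β - c)/(β - α))^m = (β - α)/(m+1) := by
  have hL : (0:ℝ) < β - α := sub_pos.2 h
  have h1 : ∀ c : ℝ, ((β - c)/(β - α))^m = (β-c)^m / (β-α)^m := fun c => div_pow _ _ _
  simp only [h1]
  rw [intervalIntegral.integral_div]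
  rw [intervalIntegral.integral_comp_sub_left (fun c : ℝ => c^m) β]
  rw [integral_pow]
  have hm : ((m:ℝ)+1) ≠ 0 := by positivity
  field_simp
  ring

lemma lintegral_Ioo_pow_right (α β : ℝ) (h : α < β) (m : ℕ) :
    ∫⁻ c in Set.Ioo α β, ENNReal.ofReal (((c - α)/(β - α))^m)
      = ENNReal.ofReal ((β - α)/(m+1)) := by
  have hL : (0:ℝ) < β - α := sub_pos.2 h
  have hf : IntegrableOn (fun c => ((c - α)/(β - α))^m) (Set.Ioo α β) := by
    apply (Continuous.integrableOn_Icc (by continuity)).mono_set Set.Ioo_subset_Icc_self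
  have h0 : 0 ≤ᵐ[volume.restrict (Set.Ioo α β)] fun c => ((c - α)/(β - α))^m := by
    filter_upwards [ae_restrict_mem measurableSet_Ioo] with c hc
    have : (0:ℝ) ≤ (c - α)/(β - α) := div_nonneg (by linarith [hc.1]) hL.le
    positivity
  rw [← ofReal_integral_eq_lintegral_ofReal hf h0]
  congr 1
  rw [← MeasureTheory.integral_Ioc_eq_integral_Ioo,
    ← intervalIntegral.integral_of_le h.le]
  exact interval_pow_right α β h m

lemma lintegral_Ioo_pow_left (α β : ℝ) (h : α < β) (m : ℕ) :
    ∫⁻ c in Set.Ioo α β, ENNReal.ofReal (((β - c)/(β - α))^m)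
      = ENNReal.ofReal ((β - α)/(m+1)) := by
  have hL : (0:ℝ) < β - α := sub_pos.2 h
  have hf : IntegrableOn (fun c => ((β - c)/(β - α))^m) (Set.Ioo α β) := by
    apply (Continuous.integrableOn_Icc (by continuity)).mono_set Set.Ioo_subset_Icc_self
  have h0 : 0 ≤ᵐ[volume.restrict (Set.Ioo α β)] fun c => ((β - c)/(β - α))^m := by
    filter_upwards [ae_restrict_mem measurableSet_Ioo] with c hc
    have : (0:ℝ) ≤ (β - c)/(β - α) := div_nonneg (by linarith [hc.2]) hL.le
    positivity
  rw [← ofReal_integral_eq_lintegral_ofReal hf h0]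
  congr 1
  rw [← MeasureTheory.integral_Ioc_eq_integral_Ioo,
    ← intervalIntegral.integral_of_le h.le]
  exact interval_pow_left α β h m
set_option maxHeartbeats 1000000 in
/-- If `E ⊆ ℝⁿ` (`n = m + 1 ≥ 2`) is a bounded convex set with nonempty interior whose diameter
is realized by boundary points `x₀, x₁` with `x₁ - x₀ = diam(E) · e_n`, then for every
`t ∈ [0,1]` the horizontal slice `E_t` of `E` through `x_t = t x₁ + (1-t) x₀` satisfies
`H^{n-1}(E_t) ≤ n |E| / diam(E)`. -/
theorem slice_measure_le
    (m : ℕ) (hm : 1 ≤ m) (E : Set (EuclideanSpace ℝ (Fin (m + 1))))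
    (hconv : Convex ℝ E) (hbd : IsBounded E) (hint : (interior E).Nonempty)
    (x₀ x₁ : EuclideanSpace ℝ (Fin (m + 1)))
    (hx₀ : x₀ ∈ frontier E) (hx₁ : x₁ ∈ frontier E)
    (hdiam : x₁ - x₀ = Metric.diam E • EuclideanSpace.single (Fin.last m) (1 : ℝ))
    (t : ℝ) (ht : t ∈ Set.Icc (0 : ℝ) 1) :
    (volume (hslice m E (t • x₁ + (1 - t) • x₀))).toReal
      ≤ (m + 1) * (volume E).toReal / Metric.diam E := by
  obtain ⟨ht0, ht1⟩ := ht
  set d := Metric.diam E with hd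
  have hdpos : 0 < d := by
    obtain ⟨x, hx⟩ := hint
    obtain ⟨r, hr, hball⟩ := Metric.isOpen_iff.1 isOpen_interior x hx
    set z := x + (r/2) • EuclideanSpace.single (Fin.last m) (1:ℝ) with hzdef
    have hdist : dist z x = r/2 := by
      rw [dist_eq_norm, hzdef, add_sub_cancel_left, norm_smul, EuclideanSpace.norm_single]
      simp only [norm_one, mul_one, Real.norm_eq_abs]
      rw [abs_of_pos (by linarith : (0:ℝ) < r/2)]
    have hz : z ∈ E := interior_subset (hball (by rw [Metric.mem_ball, hdist]; linarith))
    have hle := Metric.dist_le_diam_of_mem hbd hz (interior_subset hx)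
    rw [hdist] at hle; linarith
  set K := closure E with hKdef
  have hKconv : Convex ℝ K := hconv.closure
  have hKm : MeasurableSet K := isClosed_closure.measurableSet
  have hKbd : IsBounded K := hbd.closure
  have hx₀K : x₀ ∈ K := frontier_subset_closure hx₀
  have hx₁K : x₁ ∈ K := frontier_subset_closure hx₁
  have hvolK : volume K = volume E := by
    refine le_antisymm ?_ (measure_mono subset_closure)
    have hsub : K ⊆ E ∪ frontier E := by
      intro y hy
      by_cases hyE : y ∈ E
      · exact Or.inl hyE
      · exact Or.inr ⟨hy, fun hyi => hyE (interior_subset hyi)⟩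
    calc volume K ≤ volume (E ∪ frontier E) := measure_mono hsub
      _ ≤ volume E + volume (frontier E) := measure_union_le _ _
      _ = volume E := by rw [Convex.addHaar_frontier volume hconv, add_zero]
  set a := x₀ (Fin.last m) with ha
  set w := initE m x₀ with hw
  have hx₁eq : x₁ = x₀ + snocE m 0 d := by
    rw [← smul_single_eq_snocE, ← hdiam]; abel
  have hp : t • x₁ + (1 - t) • x₀ = x₀ + snocE m 0 (t*d) := by
    have h1 : t • x₁ + (1 - t) • x₀ = x₀ + t • (x₁ - x₀) := by module
    rw [h1, hdiam, smul_smul, smul_single_eq_snocE]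
  have hq : ∀ x : EuclideanSpace ℝ (Fin m),
      x₀ + snocE m x (t*d) = snocE m (w + x) (a + t*d) := fun x => add_snocE m x₀ x (t*d)
  set A := volume {y : EuclideanSpace ℝ (Fin m) | snocE m y (a + t*d) ∈ K} with hA
  have hAfin : A ≠ ⊤ := (isBounded_slice m K hKbd _).measure_lt_top.ne
  have hsliceA : volume (hslice m E (t • x₁ + (1 - t) • x₀)) ≤ A := by
    have hsub : hslice m E (t • x₁ + (1 - t) • x₀)
        ⊆ {x : EuclideanSpace ℝ (Fin m) | snocE m (w + x) (a + t*d) ∈ K} := by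
      intro x hx
      have hxE : t • x₁ + (1 - t) • x₀ + padZero m x ∈ E := hx
      have heq : t • x₁ + (1 - t) • x₀ + padZero m x = snocE m (w + x) (a + t*d) := by
        rw [hp, padZero_eq, add_assoc, snocE_add_snocE, zero_add, add_zero, hq]
      show snocE m (w + x) (a + t*d) ∈ K
      rw [← heq]; exact subset_closure hxE
    calc volume (hslice m E (t • x₁ + (1 - t) • x₀))
        ≤ volume {x : EuclideanSpace ℝ (Fin m) | snocE m (w + x) (a + t*d) ∈ K} :=
          measure_mono hsub
      _ = A := volume_slice_translate m K w (a + t*d)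
  have hqK : ∀ x : EuclideanSpace ℝ (Fin m), snocE m (w + x) (a + t*d) ∈ K →
      x₀ + snocE m x (t*d) ∈ K := by
    intro x hx; rw [hq]; exact hx
  have cone₀ : ∀ u : ℝ, 0 ≤ u → u ≤ 1 →
      ENNReal.ofReal (u^m) * A
        ≤ volume {y : EuclideanSpace ℝ (Fin m) | snocE m y (a + u*(t*d)) ∈ K} := by
    intro u hu0 hu1
    set T := {x : EuclideanSpace ℝ (Fin m) | snocE m (w + x) (a + t*d) ∈ K} with hT
    have hTvol : volume T = A := volume_slice_translate m K w (a + t*d)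
    have hsub : u • T ⊆ {x : EuclideanSpace ℝ (Fin m) | snocE m (w + x) (a + u*(t*d)) ∈ K} := by
      rintro _ ⟨x, hx, rfl⟩
      have hxK : x₀ + snocE m x (t*d) ∈ K := hqK x hx
      have hcomb : u • (x₀ + snocE m x (t*d)) + (1 - u) • x₀ ∈ K :=
        hKconv hxK hx₀K hu0 (by linarith) (by ring)
      have heq : u • (x₀ + snocE m x (t*d)) + (1 - u) • x₀
          = snocE m (w + u • x) (a + u*(t*d)) := by
        have h2 : u • (x₀ + snocE m x (t*d)) + (1 - u) • x₀
            = x₀ + u • snocE m x (t*d) := by module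
        rw [h2, smul_snocE, add_snocE, hw, ha]
      show snocE m (w + u • x) (a + u*(t*d)) ∈ K
      rw [← heq]; exact hcomb
    calc ENNReal.ofReal (u^m) * A
        = volume (u • T) := by
          rw [Measure.addHaar_smul_of_nonneg volume hu0, finrank_euclideanSpace_fin, hTvol]
      _ ≤ volume {x : EuclideanSpace ℝ (Fin m) | snocE m (w + x) (a + u*(t*d)) ∈ K} :=
          measure_mono hsub
      _ = volume {y : EuclideanSpace ℝ (Fin m) | snocE m y (a + u*(t*d)) ∈ K} :=
          volume_slice_translate m K w _
  have cone₁ : ∀ v : ℝ, 0 ≤ v → v ≤ 1 →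
      ENNReal.ofReal (v^m) * A
        ≤ volume {y : EuclideanSpace ℝ (Fin m) | snocE m y (a + d - v*(d - t*d)) ∈ K} := by
    intro v hv0 hv1
    set T := {x : EuclideanSpace ℝ (Fin m) | snocE m (w + x) (a + t*d) ∈ K} with hT
    have hTvol : volume T = A := volume_slice_translate m K w (a + t*d)
    have hsub : v • T ⊆ {x : EuclideanSpace ℝ (Fin m) |
        snocE m (w + x) (a + d - v*(d - t*d)) ∈ K} := by
      rintro _ ⟨x, hx, rfl⟩
      have hxK : x₀ + snocE m x (t*d) ∈ K := hqK x hx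
      have hcomb : v • (x₀ + snocE m x (t*d)) + (1 - v) • x₁ ∈ K :=
        hKconv hxK hx₁K hv0 (by linarith) (by ring)
      have heq : v • (x₀ + snocE m x (t*d)) + (1 - v) • x₁
          = snocE m (w + v • x) (a + d - v*(d - t*d)) := by
        have h2 : v • (x₀ + snocE m x (t*d)) + (1 - v) • x₁
            = x₀ + ((1 - v) • snocE m 0 d + v • snocE m x (t*d)) := by
          rw [hx₁eq]; module
        rw [h2, smul_snocE, smul_snocE, smul_zero, snocE_add_snocE, zero_add, add_snocE,
          hw, ha]
        congr 1
        ring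
      show snocE m (w + v • x) (a + d - v*(d - t*d)) ∈ K
      rw [← heq]; exact hcomb
    calc ENNReal.ofReal (v^m) * A
        = volume (v • T) := by
          rw [Measure.addHaar_smul_of_nonneg volume hv0, finrank_euclideanSpace_fin, hTvol]
      _ ≤ volume {x : EuclideanSpace ℝ (Fin m) | snocE m (w + x) (a + d - v*(d - t*d)) ∈ K} :=
          measure_mono hsub
      _ = volume {y : EuclideanSpace ℝ (Fin m) | snocE m y (a + d - v*(d - t*d)) ∈ K} :=
          volume_slice_translate m K w _
  have hF : volume K = ∫⁻ c : ℝ, volume {y : EuclideanSpace ℝ (Fin m) | snocE m y c ∈ K} :=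
    volume_eq_lintegral_slice m K hKm
  have hI1 : ENNReal.ofReal (t*d/(m+1)) * A
      ≤ ∫⁻ c in Set.Ioo a (a + t*d),
          volume {y : EuclideanSpace ℝ (Fin m) | snocE m y c ∈ K} := by
    rcases eq_or_lt_of_le (mul_nonneg ht0 hdpos.le) with h0 | hpos
    · rw [← h0]; simp
    · have hlt : a < a + t*d := by linarith
      have hmeas : Measurable fun c : ℝ => ENNReal.ofReal (((c - a)/(t*d))^m) :=
        ENNReal.measurable_ofReal.comp
          (((continuous_id.sub continuous_const).div_const _).pow _).measurable
      have hint1 : ∫⁻ c in Set.Ioo a (a + t*d), ENNReal.ofReal (((c - a)/(t*d))^m)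
          = ENNReal.ofReal (t*d/(m+1)) := by
        have h5 := lintegral_Ioo_pow_right a (a + t*d) hlt m
        simpa using h5
      have hpt : ∀ c ∈ Set.Ioo a (a + t*d),
          ENNReal.ofReal (((c - a)/(t*d))^m) * A
            ≤ volume {y : EuclideanSpace ℝ (Fin m) | snocE m y c ∈ K} := by
        intro c hc
        have hu0 : 0 ≤ (c - a)/(t*d) := div_nonneg (by linarith [hc.1]) hpos.le
        have hu1 : (c - a)/(t*d) ≤ 1 := by
          rw [div_le_one hpos]; linarith [hc.2]
        have h6 := cone₀ _ hu0 hu1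
        have hcc : a + (c - a)/(t*d)*(t*d) = c := by rw [div_mul_cancel₀ _ hpos.ne']; ring
        rwa [hcc] at h6
      calc ENNReal.ofReal (t*d/(m+1)) * A
          = ∫⁻ c in Set.Ioo a (a + t*d), ENNReal.ofReal (((c - a)/(t*d))^m) * A := by
            rw [lintegral_mul_const A hmeas, hint1]
        _ ≤ ∫⁻ c in Set.Ioo a (a + t*d),
              volume {y : EuclideanSpace ℝ (Fin m) | snocE m y c ∈ K} := by
            refine lintegral_mono_ae ?_
            exact (ae_restrict_iff' measurableSet_Ioo).2 (ae_of_all _ hpt)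
  have hI2 : ENNReal.ofReal ((d - t*d)/(m+1)) * A
      ≤ ∫⁻ c in Set.Ioo (a + t*d) (a + d),
          volume {y : EuclideanSpace ℝ (Fin m) | snocE m y c ∈ K} := by
    rcases eq_or_lt_of_le (by nlinarith : (0:ℝ) ≤ d - t*d) with h0 | hpos
    · rw [← h0]; simp
    · have hlt : a + t*d < a + d := by linarith
      have hmeas : Measurable fun c : ℝ => ENNReal.ofReal (((a + d - c)/(d - t*d))^m) :=
        ENNReal.measurable_ofReal.comp
          (((continuous_const.sub continuous_id).div_const _).pow _).measurable
      have hint1 : ∫⁻ c in Set.Ioo (a + t*d) (a + d),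
          ENNReal.ofReal (((a + d - c)/(d - t*d))^m) = ENNReal.ofReal ((d - t*d)/(m+1)) := by
        have h5 := lintegral_Ioo_pow_left (a + t*d) (a + d) hlt m
        have e1 : a + d - (a + t*d) = d - t*d := by ring
        rw [e1] at h5
        exact h5
      have hpt : ∀ c ∈ Set.Ioo (a + t*d) (a + d),
          ENNReal.ofReal (((a + d - c)/(d - t*d))^m) * A
            ≤ volume {y : EuclideanSpace ℝ (Fin m) | snocE m y c ∈ K} := by
        intro c hc
        have hv0 : 0 ≤ (a + d - c)/(d - t*d) := div_nonneg (by linarith [hc.2]) hpos.le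
        have hv1 : (a + d - c)/(d - t*d) ≤ 1 := by
          rw [div_le_one hpos]; linarith [hc.1]
        have h6 := cone₁ _ hv0 hv1
        have hcc : a + d - (a + d - c)/(d - t*d)*(d - t*d) = c := by rw [div_mul_cancel₀ _ hpos.ne']; ring
        rwa [hcc] at h6
      calc ENNReal.ofReal ((d - t*d)/(m+1)) * A
          = ∫⁻ c in Set.Ioo (a + t*d) (a + d),
              ENNReal.ofReal (((a + d - c)/(d - t*d))^m) * A := by
            rw [lintegral_mul_const A hmeas, hint1]
        _ ≤ ∫⁻ c in Set.Ioo (a + t*d) (a + d),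
              volume {y : EuclideanSpace ℝ (Fin m) | snocE m y c ∈ K} := by
            refine lintegral_mono_ae ?_
            exact (ae_restrict_iff' measurableSet_Ioo).2 (ae_of_all _ hpt)
  have hdisj : Disjoint (Set.Ioo a (a + t*d)) (Set.Ioo (a + t*d) (a + d)) := by
    rw [Set.disjoint_left]
    intro c h1 h2
    exact absurd h2.1 (not_lt.2 h1.2.le)
  have hsum : ENNReal.ofReal (t*d/(m+1)) * A + ENNReal.ofReal ((d - t*d)/(m+1)) * A
      ≤ volume E := by
    calc ENNReal.ofReal (t*d/(m+1)) * A + ENNReal.ofReal ((d - t*d)/(m+1)) * A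
        ≤ (∫⁻ c in Set.Ioo a (a + t*d),
              volume {y : EuclideanSpace ℝ (Fin m) | snocE m y c ∈ K})
          + ∫⁻ c in Set.Ioo (a + t*d) (a + d),
              volume {y : EuclideanSpace ℝ (Fin m) | snocE m y c ∈ K} := add_le_add hI1 hI2
      _ = ∫⁻ c in Set.Ioo a (a + t*d) ∪ Set.Ioo (a + t*d) (a + d),
              volume {y : EuclideanSpace ℝ (Fin m) | snocE m y c ∈ K} :=
            (lintegral_union measurableSet_Ioo hdisj).symm
      _ ≤ ∫⁻ c : ℝ, volume {y : EuclideanSpace ℝ (Fin m) | snocE m y c ∈ K} :=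
            setLIntegral_le_lintegral _ _
      _ = volume K := hF.symm
      _ = volume E := hvolK
  have hdA : ENNReal.ofReal (d/(m+1)) * A ≤ volume E := by
    have h1 : ENNReal.ofReal (d/(m+1))
        = ENNReal.ofReal (t*d/(m+1)) + ENNReal.ofReal ((d - t*d)/(m+1)) := by
      rw [← ENNReal.ofReal_add (div_nonneg (mul_nonneg ht0 hdpos.le) (by positivity))
        (div_nonneg (by nlinarith) (by positivity))]
      congr 1
      ring
    rw [h1, add_mul]
    exact hsum
  have hVfin : volume E ≠ ⊤ := hbd.measure_lt_top.ne
  have hreal : (d/((m:ℝ)+1)) * A.toReal ≤ (volume E).toReal := by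
    have h2 := ENNReal.toReal_mono hVfin hdA
    rwa [ENNReal.toReal_mul, ENNReal.toReal_ofReal (by positivity)] at h2
  have hm1 : (0:ℝ) < (m:ℝ)+1 := by positivity
  have h3 : d * A.toReal ≤ ((m:ℝ)+1) * (volume E).toReal := by
    have h4 := mul_le_mul_of_nonneg_left hreal hm1.le
    calc d * A.toReal = ((m:ℝ)+1) * ((d/((m:ℝ)+1)) * A.toReal) := by field_simp
      _ ≤ ((m:ℝ)+1) * (volume E).toReal := h4
  have hAle : A.toReal ≤ ((m:ℝ)+1) * (volume E).toReal / d := by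
    rw [le_div_iff₀ hdpos]
    linarith [h3]
  calc (volume (hslice m E (t • x₁ + (1 - t) • x₀))).toReal
      ≤ A.toReal := ENNReal.toReal_mono hAfin hsliceA
    _ ≤ ((m:ℝ)+1) * (volume E).toReal / d := hAle
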